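/- (Poisson approximation for colored balls into bins, expectation form.) Fix integers n ≥ 1, k ≥ 1 and h_1,…,h_k ≥ 1. On a probability space, for each color i ∈ {1,…,k} let the h_i balls of color i be thrown independently and uniformly at random into n bins (all throws across all colors mutually independent), and let X_{u,i} be the number of balls of color i landing in bin u. Independently, let Y_{u,i} (u ∈ {1,…,n}, i ∈ {1,…,k}) be mutually independent random variables with Y_{u,i} distributed Poisson(h_i/n), and let Z_1,…,Z_n be integer-valued random variables independent of all the X_{u,i} and of all the Y_{u,i}. Then for every nonnegative function f of the counts and of z_1,…,z_n, E[f((X_{u,i})_{u,i}, Z_1,…,Z_n)] ≤ e^k·√(∏_{i=1}^k h_i)·E[f((Y_{u,i})_{u,i}, Z_1,…,Z_n)]. -/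

import Mathlib

open MeasureTheory ProbabilityTheory
open scoped BigOperators ENNReal

section PoissonApproxAux
open Finset


lemma pa_counting (m N : ℕ) (v : Fin N → ℕ) (hv : ∑ u, v u = m) :
    (Finset.univ.filter fun g : Fin m → Fin N =>
        ∀ u, (Finset.univ.filter fun b => g b = u).card = v u).card
      * ∏ u, (v u).factorial ≤ m.factorial := by
  classical
  set S := Finset.univ.filter fun g : Fin m → Fin N =>
      ∀ u, (Finset.univ.filter fun b => g b = u).card = v u with hSdef
  have key : ∀ g : {x // x ∈ S}, ∀ u,
      (Finset.univ.filter fun b => g.1 b = u).card = v u := by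
    intro g u
    have := (Finset.mem_filter.mp g.2).2
    exact this u
  have hcardT : Fintype.card (Σ u : Fin N, Fin (v u)) = m := by
    simp [Fintype.card_sigma, hv]
  let F : {x // x ∈ S} → (∀ u, Equiv.Perm (Fin (v u))) →
      (Σ u : Fin N, Fin (v u)) → Fin m := fun g π t =>
    ((Finset.univ.filter fun b => g.1 b = t.1).orderIsoOfFin (key g t.1)
      (π t.1 t.2) : Fin m)
  have hmem : ∀ (g : {x // x ∈ S}) (π : ∀ u, Equiv.Perm (Fin (v u)))
      (t : Σ u : Fin N, Fin (v u)), g.1 (F g π t) = t.1 := by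
    intro g π t
    have := ((Finset.univ.filter fun b => g.1 b = t.1).orderIsoOfFin (key g t.1)
      (π t.1 t.2)).2
    exact (Finset.mem_filter.mp this).2
  have hFinj : ∀ (g : {x // x ∈ S}) (π : ∀ u, Equiv.Perm (Fin (v u))),
      Function.Injective (F g π) := by
    intro g π t t' ht
    have h1 : t.1 = t'.1 := by
      have a1 := hmem g π t
      have a2 := hmem g π t'
      rw [ht] at a1; rw [a1] at a2; exact a2
    obtain ⟨u, j⟩ := t; obtain ⟨u', j'⟩ := t'
    cases h1
    have : (π u j) = (π u j') := by
      have := Subtype.coe_injective (α := Fin m)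
        (a₁ := (Finset.univ.filter fun b => g.1 b = u).orderIsoOfFin (key g u) (π u j))
        (a₂ := (Finset.univ.filter fun b => g.1 b = u).orderIsoOfFin (key g u) (π u j')) ht
      exact ((Finset.univ.filter fun b => g.1 b = u).orderIsoOfFin (key g u)).injective this
    have : j = j' := (π u).injective this
    cases this; rfl
  let Φ : ({x // x ∈ S} × ∀ u, Equiv.Perm (Fin (v u))) →
      ((Σ u : Fin N, Fin (v u)) ↪ Fin m) := fun p => ⟨F p.1 p.2, hFinj p.1 p.2⟩
  have hΦinj : Function.Injective Φ := by
    intro ⟨g, π⟩ ⟨g', π'⟩ hpq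
    have hF : ∀ t, F g π t = F g' π' t := fun t => congrFun (congrArg (fun e => e.toFun) hpq) t
    have hbij : Function.Bijective (F g π) :=
      (Fintype.bijective_iff_injective_and_card (F g π)).mpr
        ⟨hFinj g π, by rw [hcardT, Fintype.card_fin]⟩
    have hg : g.1 = g'.1 := by
      funext b
      obtain ⟨t, ht⟩ := hbij.2 b
      have a1 := hmem g π t
      have a2 := hmem g' π' t
      rw [ht] at a1
      rw [← hF t, ht] at a2
      rw [a1, a2]
    have hgg : g = g' := Subtype.ext hg
    cases hgg
    have hπ : π = π' := by
      funext u
      apply Equiv.ext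
      intro j
      have h2 := hF ⟨u, j⟩
      simp only [F] at h2
      exact ((Finset.univ.filter fun b => g.1 b = u).orderIsoOfFin (key g u)).injective
        (Subtype.coe_injective h2)
    cases hπ; rfl
  calc S.card * ∏ u, (v u).factorial
      = Fintype.card ({x // x ∈ S} × ∀ u, Equiv.Perm (Fin (v u))) := by
        simp [Fintype.card_prod, Fintype.card_pi, Fintype.card_perm, Fintype.card_coe]
    _ ≤ Fintype.card ((Σ u : Fin N, Fin (v u)) ↪ Fin m) :=
        Fintype.card_le_of_injective Φ hΦinj
    _ = m.factorial := by
        rw [Fintype.card_embedding_eq, hcardT, Fintype.card_fin, Nat.descFactorial_self]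



lemma pa_factorial_le (m : ℕ) (hm : 1 ≤ m) :
    (m.factorial : ℝ) ≤ Real.exp 1 * Real.sqrt m * ((m : ℝ) / Real.exp 1) ^ m := by
  have hm0 : (0 : ℝ) < m := by exact_mod_cast hm
  have h1 : Stirling.stirlingSeq m ≤ Real.exp 1 / Real.sqrt 2 := by
    obtain ⟨j, rfl⟩ := Nat.exists_eq_add_of_le hm
    have := Stirling.stirlingSeq'_antitone (Nat.zero_le j)
    simpa [Function.comp, Nat.succ_eq_add_one, add_comm 1 j] using this
  have hden : (0 : ℝ) < Real.sqrt (2 * m) * ((m : ℝ) / Real.exp 1) ^ m := by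
    have h2m : (0 : ℝ) < 2 * m := by linarith
    positivity
  rw [Stirling.stirlingSeq, div_le_iff₀ hden] at h1
  calc (m.factorial : ℝ)
      ≤ Real.exp 1 / Real.sqrt 2 * (Real.sqrt (2 * m) * ((m : ℝ) / Real.exp 1) ^ m) := h1
    _ = Real.exp 1 * Real.sqrt m * ((m : ℝ) / Real.exp 1) ^ m := by
        rw [Real.sqrt_mul (by norm_num : (0:ℝ) ≤ 2)]
        have h2 : Real.sqrt 2 ≠ 0 := by positivity
        field_simp



lemma pa_sqrt_prod {ι : Type*} (s : Finset ι) (f : ι → ℝ) (hf : ∀ i, 0 ≤ f i) :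
    Real.sqrt (∏ i ∈ s, f i) = ∏ i ∈ s, Real.sqrt (f i) := by
  classical
  induction s using Finset.cons_induction with
  | empty => simp
  | cons a s ha ih =>
    rw [Finset.prod_cons, Finset.prod_cons, Real.sqrt_mul (hf a), ih]

lemma pa_percolor_real' (n m : ℕ) (hn : 1 ≤ n) (hm : 1 ≤ m) (v : Fin n → ℕ)
    (hv : ∑ u, v u = m) :
    ((Finset.univ.filter fun g : Fin m → Fin n =>
        ∀ u, (Finset.univ.filter fun b => g b = u).card = v u).card : ℝ)
      * ((n : ℝ)⁻¹) ^ m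
      ≤ Real.exp 1 * Real.sqrt m *
        ∏ u, (Real.exp (-((m : ℝ) / n)) * ((m : ℝ) / n) ^ (v u) / (v u).factorial) := by
  have hn0 : (0 : ℝ) < n := by exact_mod_cast hn
  have hm0 : (0 : ℝ) < m := by exact_mod_cast hm
  set N : ℕ := (Finset.univ.filter fun g : Fin m → Fin n =>
      ∀ u, (Finset.univ.filter fun b => g b = u).card = v u).card with hN
  have hcount : (N : ℝ) * ∏ u, ((v u).factorial : ℝ) ≤ (m.factorial : ℝ) := by
    rw [← Nat.cast_prod, ← Nat.cast_mul]
    exact_mod_cast pa_counting m n v hv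
  have hP : (0 : ℝ) < ∏ u, ((v u).factorial : ℝ) := by
    apply Finset.prod_pos; intro u _; exact_mod_cast Nat.factorial_pos (v u)
  have hme : ((m : ℝ) / Real.exp 1) ^ m = Real.exp (-(m : ℝ)) * (m : ℝ) ^ m := by
    rw [div_pow, Real.exp_neg,
      show Real.exp (m : ℝ) = Real.exp 1 ^ m by rw [← Real.exp_nat_mul, mul_one]]
    ring
  have hstep : (N : ℝ) * ∏ u, ((v u).factorial : ℝ)
      ≤ Real.exp 1 * Real.sqrt m * (Real.exp (-(m : ℝ)) * (m : ℝ) ^ m) := by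
    refine hcount.trans ?_
    have := pa_factorial_le m hm
    rw [hme] at this
    linarith
  have hprod : ∏ u, (Real.exp (-((m : ℝ) / n)) * ((m : ℝ) / n) ^ (v u) / (v u).factorial)
      = Real.exp (-(m : ℝ)) * ((m : ℝ) / n) ^ m / ∏ u, ((v u).factorial : ℝ) := by
    rw [Finset.prod_div_distrib, Finset.prod_mul_distrib, Finset.prod_const,
      Finset.prod_pow_eq_pow_sum, hv, Finset.card_univ, Fintype.card_fin]
    congr 2
    rw [← Real.exp_nat_mul]
    congr 1
    field_simp
  rw [hprod, ← mul_div_assoc, le_div_iff₀ hP]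
  calc (N : ℝ) * ((n : ℝ)⁻¹) ^ m * ∏ u, ((v u).factorial : ℝ)
      = ((N : ℝ) * ∏ u, ((v u).factorial : ℝ)) * ((n : ℝ)⁻¹) ^ m := by ring
    _ ≤ (Real.exp 1 * Real.sqrt m * (Real.exp (-(m : ℝ)) * (m : ℝ) ^ m)) * ((n : ℝ)⁻¹) ^ m := by
        apply mul_le_mul_of_nonneg_right hstep
        positivity
    _ = Real.exp 1 * Real.sqrt m * (Real.exp (-(m : ℝ)) * ((m : ℝ) / n) ^ m) := by
        rw [div_pow]
        field_simp
        rw [one_div, inv_pow, inv_mul_cancel₀ (by positivity)]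



lemma pa_percolor (n m : ℕ) (hn : 1 ≤ n) (hm : 1 ≤ m) (v : Fin n → ℕ) :
    (((Finset.univ.filter fun g : Fin m → Fin n =>
        ∀ u, (Finset.univ.filter fun b => g b = u).card = v u).card : ℕ) : ℝ≥0∞)
      * ((n : ℝ≥0∞)⁻¹) ^ m
      ≤ ENNReal.ofReal (Real.exp 1 * Real.sqrt m) *
        ∏ u, ENNReal.ofReal
          (Real.exp (-((m : ℝ) / n)) * ((m : ℝ) / n) ^ (v u) / (v u).factorial) := by
  classical
  have hn0 : (0 : ℝ) < n := by exact_mod_cast hn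
  by_cases hv : ∑ u, v u = m
  · have hnn : ∀ u : Fin n,
        0 ≤ Real.exp (-((m : ℝ) / n)) * ((m : ℝ) / n) ^ (v u) / (v u).factorial := by
      intro u; positivity
    rw [← ENNReal.ofReal_prod_of_nonneg (fun u _ => hnn u),
      ← ENNReal.ofReal_mul (by positivity)]
    have hcast : (((Finset.univ.filter fun g : Fin m → Fin n =>
          ∀ u, (Finset.univ.filter fun b => g b = u).card = v u).card : ℕ) : ℝ≥0∞)
        * ((n : ℝ≥0∞)⁻¹) ^ m
        = ENNReal.ofReal (((Finset.univ.filter fun g : Fin m → Fin n =>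
            ∀ u, (Finset.univ.filter fun b => g b = u).card = v u).card : ℝ)
          * ((n : ℝ)⁻¹) ^ m) := by
      rw [ENNReal.ofReal_mul (by positivity), ENNReal.ofReal_pow (by positivity),
        ENNReal.ofReal_inv_of_pos hn0, ENNReal.ofReal_natCast, ENNReal.ofReal_natCast]
    rw [hcast]
    exact ENNReal.ofReal_le_ofReal (pa_percolor_real' n m hn hm v hv)
  · have hempty : (Finset.univ.filter fun g : Fin m → Fin n =>
        ∀ u, (Finset.univ.filter fun b => g b = u).card = v u) = ∅ := by
      rw [Finset.filter_eq_empty_iff]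
      intro g _ hg
      apply hv
      have := Finset.card_eq_sum_card_fiberwise
        (f := g) (s := Finset.univ) (t := Finset.univ) (fun x _ => Finset.mem_univ (g x))
      simp only [Finset.card_univ, Fintype.card_fin] at this
      rw [this]
      exact Finset.sum_congr rfl fun u _ => (hg u).symm
    simp [hempty]


end PoissonApproxAux



/-- **Poisson approximation for colored balls into bins (expectation form).**
For each color `i ∈ {1,…,k}`, `h i` balls of color `i` are thrown independently
and uniformly at random into `n` bins (`B b` is the bin of ball `b`, all throws
mutually independent), and `X u i` counts the color-`i` balls in bin `u`.
Independently, `Y u i` are mutually independent `Poisson(h i / n)` variables, and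
`Z_1, …, Z_n` are integer-valued variables independent of all the `X u i` and
all the `Y u i`. Then for every nonnegative function `f` of the counts and of
`z_1, …, z_n`,
`E[f(X, Z)] ≤ e^k √(∏ i, h i) E[f(Y, Z)]`. -/
theorem poisson_approximation_expectation
    (n k : ℕ) (hn : 1 ≤ n) (hk : 1 ≤ k) (h : Fin k → ℕ) (hh : ∀ i, 1 ≤ h i)
    {Ω : Type} [MeasurableSpace Ω] (μ : Measure Ω) [IsProbabilityMeasure μ]
    (B : (Σ i : Fin k, Fin (h i)) → Ω → Fin n)
    (Y : Fin n → Fin k → Ω → ℕ) (Z : Fin n → Ω → ℤ)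
    (hBmeas : ∀ b, Measurable (B b))
    (hYmeas : ∀ u i, Measurable (Y u i))
    (hZmeas : ∀ u, Measurable (Z u))
    (hBunif : ∀ b v, μ {ω | B b ω = v} = (n : ℝ≥0∞)⁻¹)
    (hBindep : iIndepFun B μ)
    (hYpois : ∀ u i a, μ {ω | Y u i ω = a} =
      ENNReal.ofReal (Real.exp (-((h i : ℝ) / n)) * ((h i : ℝ) / n) ^ a / a.factorial))
    (hYindep : iIndepFun
      (fun ui : Fin n × Fin k => Y ui.1 ui.2) μ)
    (hBY : IndepFun (fun ω b => B b ω)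
      (fun ω (ui : Fin n × Fin k) => Y ui.1 ui.2 ω) μ)
    (hZindep : IndepFun
      (fun ω => ((fun b => B b ω), (fun ui : Fin n × Fin k => Y ui.1 ui.2 ω)))
      (fun ω u => Z u ω) μ)
    (X : Fin n → Fin k → Ω → ℕ)
    (hX : ∀ u i ω, X u i ω =
      (Finset.univ.filter fun b : Fin (h i) => B ⟨i, b⟩ ω = u).card)
    (f : (Fin n → Fin k → ℕ) → (Fin n → ℤ) → ℝ≥0∞) :
    ∫⁻ ω, f (fun u i => X u i ω) (fun u => Z u ω) ∂μ
      ≤ ENNReal.ofReal (Real.exp k * Real.sqrt (∏ i, (h i : ℝ))) *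
        ∫⁻ ω, f (fun u i => Y u i ω) (fun u => Z u ω) ∂μ := by
    classical
  set H : ℕ := ∑ i, h i with hH
  set Bv : Ω → ((Σ i : Fin k, Fin (h i)) → Fin n) := fun ω b => B b ω with hBvdef
  set Yv : Ω → (Fin n × Fin k → ℕ) := fun ω ui => Y ui.1 ui.2 ω with hYvdef
  set Zv : Ω → (Fin n → ℤ) := fun ω u => Z u ω with hZvdef
  have hBv : Measurable Bv := measurable_pi_lambda _ hBmeas
  have hYv : Measurable Yv := measurable_pi_lambda _ (fun ui => hYmeas ui.1 ui.2)
  have hZv : Measurable Zv := measurable_pi_lambda _ hZmeas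
  set C : ℝ≥0∞ := ENNReal.ofReal (Real.exp k * Real.sqrt (∏ i, (h i : ℝ))) with hC
  set Gset : (Fin n → Fin k → ℕ) → Finset ((Σ i : Fin k, Fin (h i)) → Fin n) :=
    fun a => Finset.univ.filter fun g =>
      ∀ u i, (Finset.univ.filter fun b : Fin (h i) => g ⟨i, b⟩ = u).card = a u i with hGsetdef
  -- probability of a single assignment
  have hatom : ∀ g : (Σ i : Fin k, Fin (h i)) → Fin n,
      μ (Bv ⁻¹' {g}) = ((n : ℝ≥0∞)⁻¹) ^ H := by
    intro g
    have hset : Bv ⁻¹' {g} = ⋂ b, (B b) ⁻¹' {g b} := by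
      ext ω
      simp [hBvdef, Set.mem_iInter, funext_iff]
    rw [hset, hBindep.meas_iInter (fun b => ⟨{g b}, measurableSet_singleton _, rfl⟩)]
    have hone : ∀ b : (Σ i : Fin k, Fin (h i)), μ ((B b) ⁻¹' {g b}) = (n : ℝ≥0∞)⁻¹ :=
      fun b => hBunif b (g b)
    rw [Finset.prod_congr rfl (fun b _ => hone b), Finset.prod_const, Finset.card_univ,
      Fintype.card_sigma]
    simp [hH]
  -- probability of the X-count event
  have hPX : ∀ a, μ (Bv ⁻¹' ↑(Gset a)) = ((Gset a).card : ℝ≥0∞) * ((n : ℝ≥0∞)⁻¹) ^ H := by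
    intro a
    have hsplit : Bv ⁻¹' ↑(Gset a) = ⋃ g ∈ Gset a, Bv ⁻¹' {g} := by
      ext ω; simp
    rw [hsplit, measure_biUnion_finset ?_ (fun g _ => hBv (measurableSet_singleton g))]
    · rw [Finset.sum_congr rfl (fun g _ => hatom g), Finset.sum_const, nsmul_eq_mul]
    · intro g _ g' _ hne
      apply Set.disjoint_left.mpr
      intro ω h1 h2
      simp only [Set.mem_preimage, Set.mem_singleton_iff] at h1 h2
      exact hne (h1.symm.trans h2)
  -- factorization of the count over colors
  have hGcard : ∀ a, (Gset a).card = ∏ i, (Finset.univ.filter fun gi : Fin (h i) → Fin n =>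
      ∀ u, (Finset.univ.filter fun b => gi b = u).card = a u i).card := by
    intro a
    rw [← Fintype.card_coe (Gset a)]
    have e : {g // g ∈ Gset a} ≃ ∀ i : Fin k, {gi : Fin (h i) → Fin n //
        ∀ u, (Finset.univ.filter fun b => gi b = u).card = a u i} := by
      refine Equiv.trans (Equiv.subtypeEquiv (Equiv.piCurry fun _ _ => Fin n) ?_)
        Equiv.subtypePiEquivPi
      intro g
      simp only [hGsetdef, Finset.mem_filter, Finset.mem_univ, true_and]
      constructor
      · intro hg i u; exact hg u i
      · intro hg u i; exact hg i u
    rw [Fintype.card_congr e, Fintype.card_pi]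
    refine Finset.prod_congr rfl fun i _ => ?_
    rw [Fintype.card_subtype]
  -- probability of the Y-count event
  have hPY : ∀ a : Fin n → Fin k → ℕ,
      μ (Yv ⁻¹' {fun ui : Fin n × Fin k => a ui.1 ui.2})
        = ∏ ui : Fin n × Fin k, ENNReal.ofReal
            (Real.exp (-((h ui.2 : ℝ) / n)) * ((h ui.2 : ℝ) / n) ^ (a ui.1 ui.2)
              / (a ui.1 ui.2).factorial) := by
    intro a
    have hset : Yv ⁻¹' {fun ui : Fin n × Fin k => a ui.1 ui.2}
        = ⋂ ui : Fin n × Fin k, (fun ω => Y ui.1 ui.2 ω) ⁻¹' {a ui.1 ui.2} := by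
      ext ω
      simp [hYvdef, Set.mem_iInter, funext_iff]
    rw [hset, hYindep.meas_iInter (fun ui => ⟨{a ui.1 ui.2}, measurableSet_singleton _, rfl⟩)]
    exact Finset.prod_congr rfl fun ui _ => hYpois ui.1 ui.2 (a ui.1 ui.2)
  -- the pointwise pmf comparison
  have hkey : ∀ a : Fin n → Fin k → ℕ,
      ((Gset a).card : ℝ≥0∞) * ((n : ℝ≥0∞)⁻¹) ^ H
        ≤ C * μ (Yv ⁻¹' {fun ui : Fin n × Fin k => a ui.1 ui.2}) := by
    intro a
    rw [hPY a, hGcard a, hH, ← Finset.prod_pow_eq_pow_sum, Nat.cast_prod,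
      ← Finset.prod_mul_distrib]
    calc ∏ i, (((Finset.univ.filter fun gi : Fin (h i) → Fin n =>
            ∀ u, (Finset.univ.filter fun b => gi b = u).card = a u i).card : ℝ≥0∞)
          * ((n : ℝ≥0∞)⁻¹) ^ (h i))
        ≤ ∏ i, (ENNReal.ofReal (Real.exp 1 * Real.sqrt (h i)) *
            ∏ u, ENNReal.ofReal
              (Real.exp (-((h i : ℝ) / n)) * ((h i : ℝ) / n) ^ (a u i)
                / (a u i).factorial)) := by
          refine Finset.prod_le_prod' fun i _ => ?_
          exact pa_percolor n (h i) hn (hh i) (fun u => a u i)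
      _ = C * ∏ ui : Fin n × Fin k, ENNReal.ofReal
            (Real.exp (-((h ui.2 : ℝ) / n)) * ((h ui.2 : ℝ) / n) ^ (a ui.1 ui.2)
              / (a ui.1 ui.2).factorial) := by
          rw [Finset.prod_mul_distrib]
          congr 1
          · rw [← ENNReal.ofReal_prod_of_nonneg (fun i _ => by positivity), hC]
            congr 1
            rw [Finset.prod_mul_distrib, Finset.prod_const, Finset.card_univ, Fintype.card_fin,
              pa_sqrt_prod Finset.univ (fun i => (h i : ℝ)) (fun i => by positivity),
              show Real.exp (k : ℝ) = Real.exp 1 ^ k by rw [← Real.exp_nat_mul, mul_one]]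
          · rw [Fintype.prod_prod_type
              (fun ui : Fin n × Fin k => ENNReal.ofReal
                (Real.exp (-((h ui.2 : ℝ) / n)) * ((h ui.2 : ℝ) / n) ^ (a ui.1 ui.2)
                  / (a ui.1 ui.2).factorial))]
            exact (Finset.prod_comm).symm
  -- rewrite both integrals as sums over the countable value space
  have l0 : ∀ (V : Fin n → Fin k → Ω → ℕ), (∀ u i, Measurable (V u i)) →
      ∫⁻ ω, f (fun u i => V u i ω) (fun u => Z u ω) ∂μ
        = ∑' p : (Fin n → Fin k → ℕ) × (Fin n → ℤ), f p.1 p.2 *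
            μ ((fun ω => ((fun u i => V u i ω), fun u => Z u ω)) ⁻¹' {p}) := by
    intro V hV
    set WV : Ω → (Fin n → Fin k → ℕ) × (Fin n → ℤ) :=
      fun ω => ((fun u i => V u i ω), fun u => Z u ω) with hWVdef
    have hWV : Measurable WV :=
      Measurable.prodMk
        (measurable_pi_lambda _ fun u => measurable_pi_lambda _ fun i => hV u i) hZv
    calc ∫⁻ ω, f (fun u i => V u i ω) (fun u => Z u ω) ∂μ
        = ∫⁻ ω, (fun p : (Fin n → Fin k → ℕ) × (Fin n → ℤ) => f p.1 p.2) (WV ω) ∂μ := rfl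
      _ = ∫⁻ p, (fun p : (Fin n → Fin k → ℕ) × (Fin n → ℤ) => f p.1 p.2) p ∂(μ.map WV) :=
          (lintegral_map (f := fun p : (Fin n → Fin k → ℕ) × (Fin n → ℤ) => f p.1 p.2)
            (measurable_of_countable _) hWV).symm
      _ = ∑' p : (Fin n → Fin k → ℕ) × (Fin n → ℤ), f p.1 p.2 * (μ.map WV) {p} :=
          lintegral_countable' _
      _ = ∑' p : (Fin n → Fin k → ℕ) × (Fin n → ℤ), f p.1 p.2 * μ (WV ⁻¹' {p}) :=
          tsum_congr fun p => by rw [Measure.map_apply hWV (measurableSet_singleton p)]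
  have hXmeas : ∀ u i, Measurable (X u i) := by
    intro u i
    have : X u i = (fun g : (Σ i : Fin k, Fin (h i)) → Fin n =>
        ((Finset.univ.filter fun b : Fin (h i) => g ⟨i, b⟩ = u).card : ℕ)) ∘ Bv :=
      funext fun ω => hX u i ω
    rw [this]
    exact (measurable_of_countable _).comp hBv
  -- pointwise comparison of the joint pmfs
  have hpoint : ∀ p : (Fin n → Fin k → ℕ) × (Fin n → ℤ),
      μ ((fun ω => ((fun u i => X u i ω), fun u => Z u ω)) ⁻¹' {p})
        ≤ C * μ ((fun ω => ((fun u i => Y u i ω), fun u => Z u ω)) ⁻¹' {p}) := by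
    rintro ⟨a, z⟩
    have hW1 : (fun ω => ((fun u i => X u i ω), fun u => Z u ω)) ⁻¹' {(a, z)}
        = Bv ⁻¹' ↑(Gset a) ∩ Zv ⁻¹' {z} := by
      ext ω
      simp only [Set.mem_preimage, Set.mem_singleton_iff, Prod.mk.injEq, Set.mem_inter_iff,
        hGsetdef, Finset.coe_filter, Set.mem_setOf_eq, Finset.mem_univ, true_and, hBvdef,
        hZvdef]
      constructor
      · rintro ⟨h1, h2⟩
        refine ⟨fun u i => ?_, h2⟩
        rw [← hX u i ω]
        exact congrFun (congrFun h1 u) i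
      · rintro ⟨h1, h2⟩
        refine ⟨funext fun u => funext fun i => ?_, h2⟩
        rw [hX u i ω]
        exact h1 u i
    have hW2 : (fun ω => ((fun u i => Y u i ω), fun u => Z u ω)) ⁻¹' {(a, z)}
        = Yv ⁻¹' {fun ui : Fin n × Fin k => a ui.1 ui.2} ∩ Zv ⁻¹' {z} := by
      ext ω
      simp only [Set.mem_preimage, Set.mem_singleton_iff, Prod.mk.injEq, Set.mem_inter_iff,
        hYvdef, hZvdef, funext_iff, Prod.forall]
    have i1 : μ (Bv ⁻¹' ↑(Gset a) ∩ Zv ⁻¹' {z})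
        = μ (Bv ⁻¹' ↑(Gset a)) * μ (Zv ⁻¹' {z}) :=
      hZindep.measure_inter_preimage_eq_mul (Prod.fst ⁻¹' ↑(Gset a)) {z}
        ((Gset a).measurableSet.preimage measurable_fst) (measurableSet_singleton z)
    have i2 : μ (Yv ⁻¹' {fun ui : Fin n × Fin k => a ui.1 ui.2} ∩ Zv ⁻¹' {z})
        = μ (Yv ⁻¹' {fun ui : Fin n × Fin k => a ui.1 ui.2}) * μ (Zv ⁻¹' {z}) :=
      hZindep.measure_inter_preimage_eq_mul
        (Prod.snd ⁻¹' {fun ui : Fin n × Fin k => a ui.1 ui.2}) {z}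
        ((measurableSet_singleton _).preimage measurable_snd) (measurableSet_singleton z)
    rw [hW1, hW2, i1, i2]
    calc μ (Bv ⁻¹' ↑(Gset a)) * μ (Zv ⁻¹' {z})
        ≤ (C * μ (Yv ⁻¹' {fun ui : Fin n × Fin k => a ui.1 ui.2})) * μ (Zv ⁻¹' {z}) := by
          apply mul_le_mul_left
          rw [hPX a]
          exact hkey a
      _ = C * (μ (Yv ⁻¹' {fun ui : Fin n × Fin k => a ui.1 ui.2}) * μ (Zv ⁻¹' {z})) :=
          mul_assoc _ _ _
  rw [l0 X hXmeas, l0 Y hYmeas]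
  calc ∑' p : (Fin n → Fin k → ℕ) × (Fin n → ℤ), f p.1 p.2 *
        μ ((fun ω => ((fun u i => X u i ω), fun u => Z u ω)) ⁻¹' {p})
      ≤ ∑' p : (Fin n → Fin k → ℕ) × (Fin n → ℤ), f p.1 p.2 *
        (C * μ ((fun ω => ((fun u i => Y u i ω), fun u => Z u ω)) ⁻¹' {p})) :=
        ENNReal.tsum_le_tsum fun p => mul_le_mul_right (hpoint p) _
    _ = C * ∑' p : (Fin n → Fin k → ℕ) × (Fin n → ℤ), f p.1 p.2 *
        μ ((fun ω => ((fun u i => Y u i ω), fun u => Z u ω)) ⁻¹' {p}) := by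
        rw [← ENNReal.tsum_mul_left]
        exact tsum_congr fun p => by ring
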